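/- Let E be a connected closed subset of ℝ^n whose boundary components B₁,…,B_s are pairwise at positive distance δ > 0 apart, each being LNE with common constant A ≥ 1, and such that for any two points x, x' of E, the segment [x,x'] decomposes as in the pancake argument: it alternates between subsegments joining two points of a single B_i and open subsegments lying in E. Then d_inn^E(x,x') ≤ A·|x − x'| for all x, x' ∈ E; that is, E is LNE with constant A. -/

import Mathlib

open Set Metric
open scoped ENNReal NNReal

/-- Length of a path `γ` parametrized by `[0,1]`, as the total variation on `[0,1]`. -/
noncomputable def pathLength {M : Type*} [PseudoEMetricSpace M] (γ : ℝ → M) : ENNReal :=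
  eVariationOn γ (Set.Icc 0 1)

/-- Inner distance in a subset `S`: infimum of lengths of continuous paths in `S`
joining `x` and `y` (it is `∞` if there is no such path). -/
noncomputable def innerDist {M : Type*} [PseudoEMetricSpace M] (S : Set M) (x y : M) : ENNReal :=
  sInf {l : ENNReal | ∃ γ : ℝ → M, ContinuousOn γ (Set.Icc 0 1) ∧
    Set.MapsTo γ (Set.Icc 0 1) S ∧ γ 0 = x ∧ γ 1 = y ∧ l = pathLength γ}

/-- `S` is Lipschitz normally embedded with constant `L`. -/
def IsLNEWith {M : Type*} [PseudoMetricSpace M] (L : ℝ) (S : Set M) : Prop :=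
  ∀ ⦃x⦄, x ∈ S → ∀ ⦃y⦄, y ∈ S → innerDist S x y ≤ ENNReal.ofReal (L * dist x y)

/-- `S` is Lipschitz normally embedded. -/
def IsLNE {M : Type*} [PseudoMetricSpace M] (S : Set M) : Prop :=
  ∃ L : ℝ, 1 ≤ L ∧ IsLNEWith L S

lemma innerDist_le_pathLength {M : Type*} [PseudoEMetricSpace M] {S : Set M} {x y : M}
    {γ : ℝ → M} (hc : ContinuousOn γ (Set.Icc 0 1)) (hm : Set.MapsTo γ (Set.Icc 0 1) S)
    (h0 : γ 0 = x) (h1 : γ 1 = y) : innerDist S x y ≤ pathLength γ :=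
  sInf_le ⟨γ, hc, hm, h0, h1, rfl⟩

lemma exists_path_lt {M : Type*} [PseudoEMetricSpace M] {S : Set M} {x y : M} {c : ℝ≥0∞}
    (h : innerDist S x y < c) : ∃ γ : ℝ → M, ContinuousOn γ (Set.Icc 0 1) ∧
      Set.MapsTo γ (Set.Icc 0 1) S ∧ γ 0 = x ∧ γ 1 = y ∧ pathLength γ < c := by
  obtain ⟨l, ⟨γ, h1, h2, h3, h4, rfl⟩, hlc⟩ := sInf_lt_iff.mp h
  exact ⟨γ, h1, h2, h3, h4, hlc⟩

lemma innerDist_anti {M : Type*} [PseudoEMetricSpace M] {S T : Set M} (h : S ⊆ T) (x y : M) :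
    innerDist T x y ≤ innerDist S x y := by
  apply sInf_le_sInf
  rintro l ⟨γ, hc, hm, h0, h1, rfl⟩
  exact ⟨γ, hc, hm.mono_right h, h0, h1, rfl⟩

lemma innerDist_triangle {M : Type*} [PseudoEMetricSpace M] (S : Set M) (x y z : M) :
    innerDist S x z ≤ innerDist S x y + innerDist S y z := by
  refine ENNReal.le_of_forall_pos_le_add fun ε hε hlt => ?_
  have h1 : innerDist S x y < ⊤ := lt_of_le_of_lt le_self_add hlt
  have h2 : innerDist S y z < ⊤ := lt_of_le_of_lt le_add_self hlt
  have hε2 : (0:ℝ≥0∞) < (ε:ℝ≥0∞)/2 :=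
    ENNReal.div_pos (by exact_mod_cast hε.ne') (by norm_num)
  obtain ⟨γ₁, c1, m1, a1, b1, l1⟩ := exists_path_lt (ENNReal.lt_add_right h1.ne hε2.ne')
  obtain ⟨γ₂, c2, m2, a2, b2, l2⟩ := exists_path_lt (ENNReal.lt_add_right h2.ne hε2.ne')
  set γ : ℝ → M := fun t => if t ≤ 1/2 then γ₁ (2*t) else γ₂ (2*t - 1) with hγ
  have Eq1 : EqOn γ (γ₁ ∘ fun t : ℝ => 2*t) (Icc 0 (1/2)) := by
    intro t ht; simp only [hγ, Function.comp]; rw [if_pos ht.2]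
  have Eq2 : EqOn γ (γ₂ ∘ fun t : ℝ => 2*t - 1) (Icc (1/2) 1) := by
    intro t ht
    rcases eq_or_lt_of_le ht.1 with h | h
    · simp only [hγ, Function.comp, ← h]
      rw [if_pos le_rfl]
      norm_num [b1, a2]
    · simp only [hγ, Function.comp]
      rw [if_neg (not_le.mpr h)]
  have himg1 : (fun t : ℝ => 2*t) '' Icc 0 (1/2) = Icc 0 1 := by
    ext u
    simp only [mem_image, mem_Icc]
    constructor
    · rintro ⟨v, ⟨hv1, hv2⟩, rfl⟩; constructor <;> linarith
    · rintro ⟨hu1, hu2⟩; exact ⟨u/2, ⟨by linarith, by linarith⟩, by ring⟩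
  have himg2 : (fun t : ℝ => 2*t - 1) '' Icc (1/2) 1 = Icc 0 1 := by
    ext u
    simp only [mem_image, mem_Icc]
    constructor
    · rintro ⟨v, ⟨hv1, hv2⟩, rfl⟩; constructor <;> linarith
    · rintro ⟨hu1, hu2⟩; exact ⟨(u+1)/2, ⟨by linarith, by linarith⟩, by ring⟩
  have hc1' : ContinuousOn γ (Icc 0 (1/2)) := by
    refine ContinuousOn.congr ?_ Eq1
    exact c1.comp (by fun_prop) (by rw [← himg1]; exact mapsTo_image _ _)
  have hc2' : ContinuousOn γ (Icc (1/2) 1) := by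
    refine ContinuousOn.congr ?_ Eq2
    exact c2.comp (by fun_prop) (by rw [← himg2]; exact mapsTo_image _ _)
  have hunion : Icc (0:ℝ) 1 = Icc 0 (1/2) ∪ Icc (1/2) 1 :=
    (Icc_union_Icc_eq_Icc (by norm_num) (by norm_num)).symm
  have hcont : ContinuousOn γ (Icc 0 1) := by
    rw [hunion]
    intro t ht
    rw [continuousWithinAt_union]
    constructor
    · rcases em (t ∈ Icc (0:ℝ) (1/2)) with h | h
      · exact hc1' t h
      · exact continuousWithinAt_of_notMem_closure (by rwa [isClosed_Icc.closure_eq])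
    · rcases em (t ∈ Icc (1/2:ℝ) 1) with h | h
      · exact hc2' t h
      · exact continuousWithinAt_of_notMem_closure (by rwa [isClosed_Icc.closure_eq])
  have hmaps : MapsTo γ (Icc 0 1) S := by
    intro t ht
    simp only [hγ]
    split_ifs with h
    · exact m1 ⟨by linarith [ht.1], by linarith⟩
    · push_neg at h
      exact m2 ⟨by linarith, by linarith [ht.2]⟩
  have hγ0 : γ 0 = x := by simp only [hγ]; rw [if_pos (by norm_num)]; norm_num [a1]
  have hγ1 : γ 1 = z := by simp only [hγ]; rw [if_neg (by norm_num)]; norm_num [b2]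
  have key : pathLength γ = pathLength γ₁ + pathLength γ₂ := by
    have e1 : eVariationOn γ (Icc 0 (1/2)) = pathLength γ₁ := by
      rw [eVariationOn.eq_of_eqOn Eq1, eVariationOn.comp_eq_of_monotoneOn _ _
        (fun u _ v _ huv => by linarith), himg1]
      rfl
    have e2 : eVariationOn γ (Icc (1/2) 1) = pathLength γ₂ := by
      rw [eVariationOn.eq_of_eqOn Eq2, eVariationOn.comp_eq_of_monotoneOn _ _
        (fun u _ v _ huv => by linarith), himg2]
      rfl
    have h12 := eVariationOn.Icc_add_Icc γ (s := Icc (0:ℝ) 1) (a := 0) (b := 1/2) (c := 1)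
      (by norm_num) (by norm_num) (by norm_num [mem_Icc])
    rw [Set.inter_eq_self_of_subset_right (Icc_subset_Icc le_rfl (by norm_num)),
      Set.inter_eq_self_of_subset_right (Icc_subset_Icc (by norm_num) le_rfl),
      Set.inter_self, e1, e2] at h12
    exact (h12.symm : pathLength γ = _)
  calc innerDist S x z ≤ pathLength γ := innerDist_le_pathLength hcont hmaps hγ0 hγ1
    _ = pathLength γ₁ + pathLength γ₂ := key
    _ ≤ (innerDist S x y + ε/2) + (innerDist S y z + ε/2) := add_le_add l1.le l2.le
    _ = innerDist S x y + innerDist S y z + (ε/2 + ε/2) := by ring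
    _ = innerDist S x y + innerDist S y z + ε := by rw [ENNReal.add_halves]

lemma innerDist_line_le {M : Type*} [NormedAddCommGroup M] [NormedSpace ℝ M] {S : Set M}
    {x v : M} (h : ∀ t ∈ Icc (0:ℝ) 1, x + t • v ∈ S) :
    innerDist S x (x + v) ≤ ENNReal.ofReal ‖v‖ := by
  set γ : ℝ → M := fun t => x + t • v with hγ
  have hlip : LipschitzWith ‖v‖₊ γ := by
    apply LipschitzWith.of_dist_le_mul
    intro s t
    have : γ s - γ t = (s - t) • v := by
      simp only [hγ]; rw [add_sub_add_left_eq_sub, ← sub_smul]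
    rw [dist_eq_norm, this, norm_smul, Real.norm_eq_abs, coe_nnnorm, Real.dist_eq, mul_comm]
  have hcont : ContinuousOn γ (Icc 0 1) := (hlip.continuous).continuousOn
  have hlen : pathLength γ ≤ ENNReal.ofReal ‖v‖ := by
    have hid : eVariationOn (id : ℝ → ℝ) (Icc 0 1) ≤ ENNReal.ofReal 1 := by
      have := MonotoneOn.eVariationOn_le (f := (id : ℝ → ℝ)) (s := Icc (0:ℝ) 1)
        (fun u _ v _ huv => huv) (a := 0) (b := 1) (by norm_num [mem_Icc]) (by norm_num [mem_Icc])
      simpa using this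
    have hcomp := LipschitzOnWith.comp_eVariationOn_le (hlip.lipschitzOnWith (s := univ))
      (s := Icc (0:ℝ) 1) (g := (id : ℝ → ℝ)) (mapsTo_univ _ _)
    calc pathLength γ = eVariationOn (γ ∘ id) (Icc 0 1) := rfl
      _ ≤ ↑‖v‖₊ * eVariationOn (id : ℝ → ℝ) (Icc 0 1) := hcomp
      _ ≤ ↑‖v‖₊ * ENNReal.ofReal 1 := by gcongr
      _ = ENNReal.ofReal ‖v‖ := by
          rw [ENNReal.ofReal_one, mul_one, ← ENNReal.ofReal_coe_nnreal, coe_nnnorm]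
  refine le_trans (innerDist_le_pathLength hcont ?_ ?_ ?_) hlen
  · exact fun t ht => h t ht
  · simp [hγ]
  · simp [hγ]

/-- the pancake argument: if the boundary components B₁,…,B_s of the closed
connected set E are δ-separated and LNE with common constant A, and every segment between
two points of E decomposes alternately into subsegments with endpoints in a single B_i and
open subsegments inside E, then E is LNE with constant A. -/
theorem pancake_isLNE {n s : ℕ} (E : Set (EuclideanSpace ℝ (Fin n)))
    (hE : IsClosed E) (hEconn : IsConnected E)
    (B : Fin s → Set (EuclideanSpace ℝ (Fin n))) (hBE : ∀ i, B i ⊆ E)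
    (δ : ℝ) (hδ : 0 < δ)
    (hsep : ∀ i j, i ≠ j → ∀ u ∈ B i, ∀ v ∈ B j, δ ≤ ‖u - v‖)
    (A : ℝ) (hA : 1 ≤ A) (hB : ∀ i, IsLNEWith A (B i))
    (hdecomp : ∀ x ∈ E, ∀ x' ∈ E, ∃ p : ℕ, 0 < p ∧ ∃ a b : ℕ → ℝ, ∃ i : ℕ → Fin s,
      a 1 = 0 ∧ b p = 1 ∧
      (∀ k, 1 ≤ k → k ≤ p → a k ≤ b k) ∧
      (∀ k, 1 ≤ k → k < p → b k < a (k + 1)) ∧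
      (∀ k, 1 ≤ k → k ≤ p →
        x + a k • (x' - x) ∈ B (i k) ∧ x + b k • (x' - x) ∈ B (i k)) ∧
      (∀ k, 1 ≤ k → k < p → ∀ t ∈ Set.Ioo (b k) (a (k + 1)), x + t • (x' - x) ∈ E) ∧
      (∀ k, 1 ≤ k → k < p → i k ≠ i (k + 1))) :
    ∀ x ∈ E, ∀ x' ∈ E, innerDist E x x' ≤ ENNReal.ofReal (A * ‖x - x'‖) := by
  intro x hx x' hx'
  obtain ⟨p, hp, a, b, i, ha1, hbp, hab, hba, hmem, hIoo, _⟩ := hdecomp x hx x' hx'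
  set w : EuclideanSpace ℝ (Fin n) := x' - x with hw
  set d : ℝ := ‖w‖ with hd
  have hd0 : 0 ≤ d := norm_nonneg _
  set pt : ℝ → EuclideanSpace ℝ (Fin n) := fun t => x + t • w with hpt
  have hA0 : 0 ≤ A := le_trans zero_le_one hA
  have hdist : ∀ u v : ℝ, dist (pt u) (pt v) = |u - v| * d := by
    intro u v
    have hsub : pt u - pt v = (u - v) • w := by
      simp only [hpt]; rw [add_sub_add_left_eq_sub, ← sub_smul]
    rw [dist_eq_norm, hsub, norm_smul, Real.norm_eq_abs]
  -- bound via LNE components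
  have piece : ∀ (j : Fin s) (u v : ℝ), 0 ≤ v - u → pt u ∈ B j → pt v ∈ B j →
      innerDist E (pt u) (pt v) ≤ ENNReal.ofReal (A * ((v - u) * d)) := by
    intro j u v huv hu hv
    refine le_trans (innerDist_anti (hBE j) _ _) (le_trans (hB j hu hv) ?_)
    rw [hdist, abs_sub_comm, abs_of_nonneg huv]
  -- main induction
  have main : ∀ k, 1 ≤ k → k ≤ p →
      0 ≤ a k ∧ innerDist E x (pt (b k)) ≤ ENNReal.ofReal (A * (b k * d)) := by
    intro k hk
    induction k, hk using Nat.le_induction with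
    | base =>
      intro h1p
      refine ⟨le_of_eq ha1.symm, ?_⟩
      have hx0 : pt (a 1) = x := by simp [hpt, ha1]
      have := piece (i 1) (a 1) (b 1) (by linarith [hab 1 le_rfl h1p])
        (hmem 1 le_rfl h1p).1 (hmem 1 le_rfl h1p).2
      rw [hx0] at this
      refine le_trans this (le_of_eq ?_)
      rw [ha1]; ring_nf
    | succ k hk ih =>
      intro hk1p
      have hkp : k < p := lt_of_lt_of_le (Nat.lt_succ_self k) hk1p
      have hkp' : k ≤ p := le_of_lt hkp
      obtain ⟨hak0, ihd⟩ := ih hkp'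
      have habk := hab k hk hkp'
      have hbak := hba k hk hkp
      have hab1 := hab (k+1) (by omega) hk1p
      have hbk0 : 0 ≤ b k := le_trans hak0 habk
      have hak10 : 0 ≤ a (k+1) := le_trans hbk0 (le_of_lt hbak)
      refine ⟨hak10, ?_⟩
      -- segment piece from pt (b k) to pt (a (k+1))
      have seg : innerDist E (pt (b k)) (pt (a (k+1))) ≤
          ENNReal.ofReal ((a (k+1) - b k) * d) := by
        have hv : pt (a (k+1)) = pt (b k) + (a (k+1) - b k) • w := by
          simp only [hpt]; rw [add_assoc, ← add_smul]; ring_nf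
        have hin : ∀ t ∈ Icc (0:ℝ) 1, pt (b k) + t • ((a (k+1) - b k) • w) ∈ E := by
          intro t ht
          have heq : pt (b k) + t • ((a (k+1) - b k) • w)
              = pt (b k + t * (a (k+1) - b k)) := by
            simp only [hpt]; rw [add_assoc, smul_smul, ← add_smul]
          rw [heq]
          set u := b k + t * (a (k+1) - b k) with hu
          have hu1 : b k ≤ u := by nlinarith [mul_nonneg ht.1 (by linarith : (0:ℝ) ≤ a (k+1) - b k)]
          have hu2 : u ≤ a (k+1) := by nlinarith [mul_nonneg (by linarith [ht.2] : (0:ℝ) ≤ 1 - t) (by linarith : (0:ℝ) ≤ a (k+1) - b k)]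
          rcases eq_or_lt_of_le hu1 with h | h
          · rw [← h]; exact hBE _ (hmem k hk hkp').2
          rcases eq_or_lt_of_le hu2 with h' | h'
          · rw [h']; exact hBE _ (hmem (k+1) (by omega) hk1p).1
          · exact hIoo k hk hkp u ⟨h, h'⟩
        have := innerDist_line_le (S := E) hin
        rw [← hv] at this
        refine le_trans this (le_of_eq ?_)
        rw [norm_smul, Real.norm_eq_abs, abs_of_nonneg (by linarith)]
      have pc := piece (i (k+1)) (a (k+1)) (b (k+1)) (by linarith)
        (hmem (k+1) (by omega) hk1p).1 (hmem (k+1) (by omega) hk1p).2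
      calc innerDist E x (pt (b (k+1)))
          ≤ innerDist E x (pt (b k)) + innerDist E (pt (b k)) (pt (b (k+1))) :=
            innerDist_triangle E _ _ _
        _ ≤ innerDist E x (pt (b k)) + (innerDist E (pt (b k)) (pt (a (k+1)))
              + innerDist E (pt (a (k+1))) (pt (b (k+1)))) :=
            add_le_add_right (innerDist_triangle E _ _ _) _
        _ ≤ ENNReal.ofReal (A * (b k * d)) + (ENNReal.ofReal ((a (k+1) - b k) * d)
              + ENNReal.ofReal (A * ((b (k+1) - a (k+1)) * d))) :=
            add_le_add ihd (add_le_add seg pc)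
        _ = ENNReal.ofReal (A * (b k * d) + ((a (k+1) - b k) * d
              + A * ((b (k+1) - a (k+1)) * d))) := by
            have n1 : 0 ≤ A * (b k * d) := mul_nonneg hA0 (mul_nonneg hbk0 hd0)
            have n2 : 0 ≤ (a (k+1) - b k) * d := mul_nonneg (by linarith) hd0
            have n3 : 0 ≤ A * ((b (k+1) - a (k+1)) * d) :=
              mul_nonneg hA0 (mul_nonneg (by linarith) hd0)
            rw [← ENNReal.ofReal_add n2 n3, ← ENNReal.ofReal_add n1 (by linarith)]
        _ ≤ ENNReal.ofReal (A * (b (k+1) * d)) := by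
            apply ENNReal.ofReal_le_ofReal
            nlinarith [mul_nonneg (mul_nonneg (by linarith : (0:ℝ) ≤ A - 1) (by linarith : (0:ℝ) ≤ a (k+1) - b k)) hd0]
  obtain ⟨_, hfin⟩ := main p (by omega) le_rfl
  have hptp : pt (b p) = x' := by simp [hpt, hbp, hw]
  rw [hptp, hbp] at hfin
  refine le_trans hfin (le_of_eq ?_)
  rw [hd, hw, norm_sub_rev]; ring_nf
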